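/- Every word u over {1,2} satisfies exactly one of the following: u begins with the digit 1; u has at least two distinct covers below it in the Young–Fibonacci order (i.e., at least two words that u covers); u = 2; or u = ε. -/

import Mathlib

inductive YFDigit : Type
  | one : YFDigit
  | two : YFDigit
  deriving DecidableEq, Repr

abbrev YFWord := List YFDigit

namespace YFWord

/-- value of a digit -/
def digitVal : YFDigit → ℕ
  | .one => 1
  | .two => 2

/-- digit sum of a word -/
def dsum (v : YFWord) : ℕ := (v.map digitVal).sum

/-- number of 2's in a word -/
def twos (v : YFWord) : ℕ := v.count YFDigit.two

/-- longest common prefix of two lists -/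
def commonPrefix : YFWord → YFWord → YFWord
  | a :: x, b :: y => if a = b then a :: commonPrefix x y else []
  | _, _ => []

/-- longest common suffix -/
def lcs (x y : YFWord) : YFWord := (commonPrefix x.reverse y.reverse).reverse

/-- the prefix of `x` remaining after deleting the longest common suffix of `x` and `y` -/
def rem (x y : YFWord) : YFWord := x.take (x.length - (lcs x y).length)

/-- the Young–Fibonacci order: x ≤ y iff, after removing the longest common suffix,
the remaining prefix of `y` has at least as many 2's as the remaining prefix of `x` has digits -/
def yfLE (x y : YFWord) : Prop := (rem x y).length ≤ twos (rem y x)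

/-- strict Young–Fibonacci order -/
def yfLT (x y : YFWord) : Prop := yfLE x y ∧ ¬ yfLE y x

/-- `y` covers `x` in the Young–Fibonacci order -/
def covers (x y : YFWord) : Prop := yfLT x y ∧ ∀ z, ¬ (yfLT x z ∧ yfLT z y)

end YFWord

open YFWord

/-- `u` begins with the digit 1 -/
def startsWithOne (u : YFWord) : Prop := ∃ r : YFWord, u = YFDigit.one :: r

/-- `u` covers at least two distinct words -/
def hasTwoParentsBelow (u : YFWord) : Prop :=
  ∃ w₁ w₂ : YFWord, covers w₁ u ∧ covers w₂ u ∧ w₁ ≠ w₂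

namespace YFWord

theorem cp_prefix (x : YFWord) : ∀ y, commonPrefix x y <+: x := by
  induction x with
  | nil => intro y; cases y <;> exact List.nil_prefix
  | cons a x ih =>
    intro y
    cases y with
    | nil => exact List.nil_prefix
    | cons b y =>
      simp only [commonPrefix]
      split
      · exact List.cons_prefix_cons.2 ⟨rfl, ih y⟩
      · exact List.nil_prefix

theorem cp_symm (x : YFWord) : ∀ y, commonPrefix x y = commonPrefix y x := by
  induction x with
  | nil => intro y; cases y <;> rfl
  | cons a x ih =>
    intro y
    cases y with
    | nil => rfl
    | cons b y =>
      simp only [commonPrefix]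
      by_cases h : a = b
      · subst h; simp [ih]
      · simp [h, Ne.symm h]

theorem cp_longest : ∀ {z x y : YFWord}, z <+: x → z <+: y → z <+: commonPrefix x y := by
  intro z
  induction z with
  | nil => intros; exact List.nil_prefix
  | cons c z ih =>
    intro x y hx hy
    cases x with
    | nil => simp [List.prefix_nil] at hx
    | cons a x =>
      cases y with
      | nil => simp [List.prefix_nil] at hy
      | cons b y =>
        obtain ⟨h1, hx'⟩ := List.cons_prefix_cons.1 hx
        obtain ⟨h2, hy'⟩ := List.cons_prefix_cons.1 hy
        subst h1
        subst h2
        simp only [commonPrefix, if_pos rfl]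
        exact List.cons_prefix_cons.2 ⟨rfl, ih hx' hy'⟩

theorem lcs_symm (x y : YFWord) : lcs x y = lcs y x := by rw [lcs, lcs, cp_symm]

theorem lcs_suffix (x y : YFWord) : lcs x y <:+ x := by
  have h2 : (commonPrefix x.reverse y.reverse).reverse <:+ x.reverse.reverse :=
    List.reverse_suffix.2 (cp_prefix x.reverse y.reverse)
  simpa [lcs] using h2

theorem lcs_longest {s x y : YFWord} (hx : s <:+ x) (hy : s <:+ y) : s <:+ lcs x y := by
  have h := cp_longest (List.reverse_prefix.2 hx) (List.reverse_prefix.2 hy)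
  have h2 : s.reverse.reverse <:+ (commonPrefix x.reverse y.reverse).reverse :=
    List.reverse_suffix.2 h
  simpa [lcs] using h2

theorem rem_append (x y : YFWord) : rem x y ++ lcs x y = x := by
  obtain ⟨w, hw⟩ := lcs_suffix x y
  rw [rem]
  generalize hL : lcs x y = L at hw ⊢
  subst hw
  have hlen : (w ++ L).length - L.length = w.length := by
    rw [List.length_append]; omega
  rw [hlen, List.take_left]

theorem twos_le_length (v : YFWord) : twos v ≤ v.length := List.count_le_length

theorem twos_append (v w : YFWord) : twos (v ++ w) = twos v + twos w :=
  List.count_append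

theorem dsum_nil : dsum [] = 0 := rfl

theorem dsum_cons (a : YFDigit) (l : YFWord) : dsum (a :: l) = digitVal a + dsum l := by
  simp [dsum]

theorem dsum_append (v w : YFWord) : dsum (v ++ w) = dsum v + dsum w := by
  simp [dsum]

theorem dsum_eq (v : YFWord) : dsum v = v.length + twos v := by
  induction v with
  | nil => rfl
  | cons a l ih =>
    cases a <;> simp [dsum, twos, List.count_cons, digitVal] at * <;> omega

theorem yfLE_iff {x y : YFWord} :
    yfLE x y ↔ ∃ p q s : YFWord, x = p ++ s ∧ y = q ++ s ∧ p.length ≤ twos q := by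
  constructor
  · intro h
    refine ⟨rem x y, rem y x, lcs x y, (rem_append x y).symm, ?_, h⟩
    rw [lcs_symm x y]; exact (rem_append y x).symm
  · rintro ⟨p, q, s, rfl, rfl, hpq⟩
    obtain ⟨t, ht⟩ := lcs_longest (⟨p, rfl⟩ : s <:+ p ++ s) (⟨q, rfl⟩ : s <:+ q ++ s)
    have hx := rem_append (p ++ s) (q ++ s)
    have hy := rem_append (q ++ s) (p ++ s)
    rw [← ht] at hx
    rw [lcs_symm, ← ht] at hy
    rw [← List.append_assoc] at hx hy
    have hp : rem (p ++ s) (q ++ s) ++ t = p := List.append_cancel_right hx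
    have hq : rem (q ++ s) (p ++ s) ++ t = q := List.append_cancel_right hy
    have l1 : (rem (p ++ s) (q ++ s)).length + t.length = p.length := by
      have := congrArg List.length hp
      simpa [List.length_append] using this
    have l2 : twos (rem (q ++ s) (p ++ s)) + twos t = twos q := by
      have := congrArg twos hq
      simpa [twos_append] using this
    have l3 := twos_le_length t
    rw [yfLE]
    omega

theorem dsum_mono {x y : YFWord} (h : yfLE x y) : dsum x ≤ dsum y := by
  have dx := congrArg dsum (rem_append x y)
  have dy := congrArg dsum (rem_append y x)
  rw [dsum_append] at dx dy
  rw [lcs_symm y x] at dy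
  have e1 := dsum_eq (rem x y)
  have e2 := dsum_eq (rem y x)
  have t1 := twos_le_length (rem x y)
  have t2 := twos_le_length (rem y x)
  rw [yfLE] at h
  omega

theorem dsum_lt {x y : YFWord} (h : yfLT x y) : dsum x < dsum y := by
  obtain ⟨h1, h2⟩ := h
  rw [yfLE] at h1 h2
  push_neg at h2
  have dx := congrArg dsum (rem_append x y)
  have dy := congrArg dsum (rem_append y x)
  rw [dsum_append] at dx dy
  rw [lcs_symm y x] at dy
  have e1 := dsum_eq (rem x y)
  have e2 := dsum_eq (rem y x)
  have t1 := twos_le_length (rem x y)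
  have t2 := twos_le_length (rem y x)
  omega

theorem yfLT_of {x y : YFWord} (h : yfLE x y) (hd : dsum x < dsum y) : yfLT x y :=
  ⟨h, fun h' => absurd (dsum_mono h') (by omega)⟩

theorem covers_of {x y : YFWord} (h : yfLT x y) (hd : dsum y = dsum x + 1) :
    covers x y := by
  refine ⟨h, fun z hz => ?_⟩
  have h1 := dsum_lt hz.1
  have h2 := dsum_lt hz.2
  omega

theorem yf_antisymm {x y : YFWord} (h1 : yfLE x y) (h2 : yfLE y x) : x = y := by
  rw [yfLE] at h1 h2
  have t1 := twos_le_length (rem x y)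
  have t2 := twos_le_length (rem y x)
  have ha : twos (rem x y) = (rem x y).length := by omega
  have hb : twos (rem y x) = (rem y x).length := by omega
  have hl : (rem x y).length = (rem y x).length := by omega
  have ra : rem x y = List.replicate (rem x y).length YFDigit.two :=
    List.eq_replicate_iff.2 ⟨rfl, fun b hb' => (List.count_eq_length.1 ha b hb').symm⟩
  have rb : rem y x = List.replicate (rem y x).length YFDigit.two :=
    List.eq_replicate_iff.2 ⟨rfl, fun b hb' => (List.count_eq_length.1 hb b hb').symm⟩
  have hr : rem x y = rem y x := by rw [ra, rb, hl]
  have ex := rem_append x y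
  rw [← ex, hr, lcs_symm x y]
  exact rem_append y x

theorem le_of_lt_cons_one {w r : YFWord} (h : yfLT w (YFDigit.one :: r)) : yfLE w r := by
  obtain ⟨h1, h2⟩ := h
  rw [yfLE_iff] at h1
  obtain ⟨p, q, s, hx, hy, hpq⟩ := h1
  cases q with
  | nil =>
    exfalso
    apply h2
    rw [yfLE_iff]
    simp only [List.nil_append] at hy
    exact ⟨[], p, s, by simpa using hy, hx, by simp⟩
  | cons d q' =>
    rw [List.cons_append] at hy
    injection hy with hd hr
    subst hd
    rw [yfLE_iff]
    refine ⟨p, q', s, hx, hr, ?_⟩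
    simpa [twos, List.count_cons] using hpq

theorem cover_below_cons_one {w r : YFWord} (h : covers w (YFDigit.one :: r)) : w = r := by
  obtain ⟨hlt, hmax⟩ := h
  have hle : yfLE w r := le_of_lt_cons_one hlt
  by_contra hne
  have hltr : yfLT w r := ⟨hle, fun h' => hne (yf_antisymm hle h')⟩
  have hr : yfLT r (YFDigit.one :: r) := by
    refine yfLT_of (yfLE_iff.2 ⟨[], [YFDigit.one], r, rfl, rfl, by simp⟩) ?_
    simp only [dsum_cons, digitVal]
    omega
  exact hmax r ⟨hltr, hr⟩

end YFWord
theorem yf_exactly_one_of_four (u : YFWord) :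
    (startsWithOne u ∧ ¬ hasTwoParentsBelow u ∧ u ≠ [YFDigit.two] ∧ u ≠ []) ∨
    (¬ startsWithOne u ∧ hasTwoParentsBelow u ∧ u ≠ [YFDigit.two] ∧ u ≠ []) ∨
    (¬ startsWithOne u ∧ ¬ hasTwoParentsBelow u ∧ u = [YFDigit.two] ∧ u ≠ []) ∨
    (¬ startsWithOne u ∧ ¬ hasTwoParentsBelow u ∧ u ≠ [YFDigit.two] ∧ u = []) := by
  match u with
  | [] =>
    refine Or.inr (Or.inr (Or.inr ⟨?_, ?_, by simp, rfl⟩))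
    · rintro ⟨r, h⟩; exact List.cons_ne_nil _ _ h.symm
    · rintro ⟨w₁, w₂, ⟨hlt, _⟩, _, _⟩
      have := dsum_lt hlt
      simp [dsum] at this
  | [YFDigit.two] =>
    refine Or.inr (Or.inr (Or.inl ⟨?_, ?_, rfl, by simp⟩))
    · rintro ⟨r, h⟩; exact YFDigit.noConfusion (List.head_eq_of_cons_eq h)
    · have key : ∀ w, covers w [YFDigit.two] → w = [YFDigit.one] := by
        rintro w ⟨hlt, hmax⟩
        have hd := dsum_lt hlt
        have he := dsum_eq w
        have hu : dsum [YFDigit.two] = 2 := by simp [dsum, digitVal]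
        match w with
        | [YFDigit.one] => rfl
        | [] =>
          exfalso
          apply hmax [YFDigit.one]
          constructor
          · refine yfLT_of (yfLE_iff.2 ⟨[], [YFDigit.one], [], rfl, rfl, by simp⟩) ?_
            simp only [dsum_nil, dsum_cons, digitVal]; omega
          · refine yfLT_of (yfLE_iff.2
              ⟨[YFDigit.one], [YFDigit.two], [], rfl, rfl, by decide⟩) ?_
            simp only [dsum_cons, dsum_nil, digitVal]; omega
        | [YFDigit.two] => exact absurd hlt.1 hlt.2
        | a :: b :: l =>
          exfalso
          have hlen : (a :: b :: l).length = l.length + 2 := by simp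
          have ht := twos_le_length (a :: b :: l)
          omega
      rintro ⟨w₁, w₂, h₁, h₂, hne⟩
      exact hne ((key w₁ h₁).trans (key w₂ h₂).symm)
  | YFDigit.one :: r =>
    refine Or.inl ⟨⟨r, rfl⟩, ?_, by simp, by simp⟩
    rintro ⟨w₁, w₂, h₁, h₂, hne⟩
    exact hne ((cover_below_cons_one h₁).trans (cover_below_cons_one h₂).symm)
  | YFDigit.two :: c :: r =>
    refine Or.inr (Or.inl ⟨?_, ?_, by simp, by simp⟩)
    · rintro ⟨r', h⟩; exact YFDigit.noConfusion (List.head_eq_of_cons_eq h)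
    have hw₁ : covers (YFDigit.one :: c :: r) (YFDigit.two :: c :: r) := by
      refine covers_of (yfLT_of (yfLE_iff.2
        ⟨[YFDigit.one], [YFDigit.two], c :: r, rfl, rfl, by decide⟩) ?_) ?_ <;>
        (simp only [dsum_cons, digitVal]; omega)
    cases c with
    | one =>
      refine ⟨YFDigit.one :: YFDigit.one :: r, YFDigit.two :: r, hw₁, ?_, by simp⟩
      refine covers_of (yfLT_of (yfLE_iff.2
        ⟨[YFDigit.two], [YFDigit.two, YFDigit.one], r, rfl, rfl, by decide⟩) ?_) ?_ <;>
        (simp only [dsum_cons, digitVal]; omega)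
    | two =>
      refine ⟨YFDigit.one :: YFDigit.two :: r, YFDigit.two :: YFDigit.one :: r, hw₁, ?_, by simp⟩
      refine covers_of (yfLT_of (yfLE_iff.2
        ⟨[YFDigit.two, YFDigit.one], [YFDigit.two, YFDigit.two], r, rfl, rfl, by decide⟩) ?_) ?_ <;>
        (simp only [dsum_cons, digitVal]; omega)
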